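/- arXiv:0801.1185 — 3 statements merged into one kernel-verified Lean document; each statement's English description precedes it below -/
import Mathlib

section
/- The divergence function d(x;F) = Σ_{i=1}^K W_i(x) log(W_i(x)/R(y_i;F)) converges to -log R(y_K;F) as x → ∞, where R(y_i;F) = ∫ W_i(x) dF(x) is the output probability mass function under input distribution F, provided R(y_i;F) > 0 for all i. -/
open MeasureTheory Filter Finset

/-- Complementary standard Gaussian CDF. -/
noncomputable def Qc (x : ℝ) : ℝ :=
  ∫ t in Set.Ioi x, Real.exp (-t ^ 2 / 2) / Real.sqrt (2 * Real.pi)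

/-- Transition probabilities of the AWGN channel with `K`-bin quantizer with thresholds
`q 1 < ⋯ < q (K-1)` (conventions `Q(-∞) = 1`, `Q(∞) = 0`). -/
noncomputable def W (K : ℕ) (q : ℕ → ℝ) (σ : ℝ) (x : ℝ) (i : ℕ) : ℝ :=
  (if i = 1 then 1 else Qc ((q (i - 1) - x) / σ)) -
    (if i = K then 0 else Qc ((q i - x) / σ))

/-- Output probability mass function under input distribution `F`. -/
noncomputable def R (K : ℕ) (q : ℕ → ℝ) (σ : ℝ) (F : Measure ℝ) (i : ℕ) : ℝ :=
  ∫ x, W K q σ x i ∂F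

/-- The divergence `d(x;F)` between the transition PMF at `x` and the output PMF. -/
noncomputable def ddiv (K : ℕ) (q : ℕ → ℝ) (σ : ℝ) (F : Measure ℝ) (x : ℝ) : ℝ :=
  ∑ i ∈ Finset.Icc 1 K, W K q σ x i * Real.log (W K q σ x i / R K q σ F i)

lemma gauss_integrable :
    Integrable (fun t : ℝ => Real.exp (-t ^ 2 / 2) / Real.sqrt (2 * Real.pi)) := by
  have h : Integrable (fun t : ℝ => Real.exp (-(1/2 : ℝ) * t ^ 2)) :=
    integrable_exp_neg_mul_sq (by norm_num)
  have := h.div_const (Real.sqrt (2 * Real.pi))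
  refine this.congr (Eventually.of_forall fun t => ?_)
  ring_nf

lemma gauss_total :
    ∫ t : ℝ, Real.exp (-t ^ 2 / 2) / Real.sqrt (2 * Real.pi) = 1 := by
  have h : ∫ t : ℝ, Real.exp (-(1/2 : ℝ) * t ^ 2) = Real.sqrt (Real.pi / (1/2)) :=
    integral_gaussian (1/2)
  have heq : ∀ t : ℝ, Real.exp (-t ^ 2 / 2) / Real.sqrt (2 * Real.pi)
      = Real.exp (-(1/2 : ℝ) * t ^ 2) / Real.sqrt (2 * Real.pi) := by
    intro t; ring_nf
  simp_rw [heq]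
  rw [integral_div, h]
  rw [div_eq_one_iff_eq (by positivity)]
  congr 1
  ring

lemma Qc_tendsto_atBot : Tendsto Qc atBot (nhds 1) := by
  rw [← gauss_total]
  have : ∀ x : ℝ, Qc x = ∫ t : ℝ, Set.indicator (Set.Ioi x)
      (fun t => Real.exp (-t ^ 2 / 2) / Real.sqrt (2 * Real.pi)) t := by
    intro x
    rw [integral_indicator measurableSet_Ioi]
    rfl
  rw [show Qc = _ from funext this]
  refine tendsto_integral_filter_of_dominated_convergence
    (fun t => Real.exp (-t ^ 2 / 2) / Real.sqrt (2 * Real.pi)) ?_ ?_ gauss_integrable ?_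
  · refine Eventually.of_forall fun x => ?_
    exact (gauss_integrable.aestronglyMeasurable.indicator measurableSet_Ioi)
  · refine Eventually.of_forall fun x => Eventually.of_forall fun t => ?_
    rw [Set.indicator_apply]
    split_ifs
    · rw [Real.norm_eq_abs, abs_of_nonneg (by positivity)]
    · simp [Real.norm_eq_abs]; positivity
  · refine Eventually.of_forall fun t => ?_
    have : ∀ᶠ x : ℝ in atBot, Set.indicator (Set.Ioi x)
        (fun t => Real.exp (-t ^ 2 / 2) / Real.sqrt (2 * Real.pi)) t
        = Real.exp (-t ^ 2 / 2) / Real.sqrt (2 * Real.pi) := by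
      filter_upwards [eventually_lt_atBot t] with x hx
      rw [Set.indicator_of_mem (Set.mem_Ioi.mpr hx)]
    exact tendsto_const_nhds.congr' (this.mono fun x hx => hx.symm)

lemma Qc_tendsto_atTop : Tendsto Qc atTop (nhds 0) := by
  have : ∀ x : ℝ, Qc x = ∫ t : ℝ, Set.indicator (Set.Ioi x)
      (fun t => Real.exp (-t ^ 2 / 2) / Real.sqrt (2 * Real.pi)) t := by
    intro x
    rw [integral_indicator measurableSet_Ioi]
    rfl
  rw [show Qc = _ from funext this, show (0 : ℝ) = ∫ t : ℝ, (0 : ℝ) by simp]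
  refine tendsto_integral_filter_of_dominated_convergence
    (fun t => Real.exp (-t ^ 2 / 2) / Real.sqrt (2 * Real.pi)) ?_ ?_ gauss_integrable ?_
  · refine Eventually.of_forall fun x => ?_
    exact (gauss_integrable.aestronglyMeasurable.indicator measurableSet_Ioi)
  · refine Eventually.of_forall fun x => Eventually.of_forall fun t => ?_
    rw [Set.indicator_apply]
    split_ifs
    · rw [Real.norm_eq_abs, abs_of_nonneg (by positivity)]
    · simp [Real.norm_eq_abs]; positivity
  · refine Eventually.of_forall fun t => ?_
    have : ∀ᶠ x : ℝ in atTop, Set.indicator (Set.Ioi x)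
        (fun t => Real.exp (-t ^ 2 / 2) / Real.sqrt (2 * Real.pi)) t = 0 := by
      filter_upwards [eventually_ge_atTop t] with x hx
      rw [Set.indicator_of_notMem (by simpa using hx)]
    exact tendsto_const_nhds.congr' (this.mono fun x hx => hx.symm)

lemma arg_tendsto (c σ : ℝ) (hσ : 0 < σ) :
    Tendsto (fun x : ℝ => (c - x) / σ) atTop atBot := by
  apply Tendsto.atBot_div_const hσ
  exact (tendsto_atBot_add_const_left atTop c tendsto_neg_atTop_atBot).congr (fun x => by ring)

lemma W_tendsto (K : ℕ) (q : ℕ → ℝ) (σ : ℝ) (hσ : 0 < σ) (i : ℕ) :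
    Tendsto (fun x => W K q σ x i) atTop (nhds (if i = K then 1 else 0)) := by
  have hQ : ∀ c : ℝ, Tendsto (fun x : ℝ => Qc ((c - x) / σ)) atTop (nhds 1) :=
    fun c => Qc_tendsto_atBot.comp (arg_tendsto c σ hσ)
  unfold W
  have h1 : Tendsto (fun x => if i = 1 then (1:ℝ) else Qc ((q (i - 1) - x) / σ)) atTop
      (nhds 1) := by
    split_ifs
    · exact tendsto_const_nhds
    · exact hQ _
  have h2 : Tendsto (fun x => if i = K then (0:ℝ) else Qc ((q i - x) / σ)) atTop
      (nhds (if i = K then 0 else 1)) := by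
    split_ifs
    · exact tendsto_const_nhds
    · exact hQ _
  have := h1.sub h2
  convert this using 2
  split_ifs <;> norm_num

theorem divergence_limit (K : ℕ) (hK : 1 ≤ K) (q : ℕ → ℝ) (σ : ℝ) (hσ : 0 < σ)
    (hq : ∀ j, 1 ≤ j → j < K - 1 → q j < q (j + 1))
    (F : Measure ℝ) [IsProbabilityMeasure F]
    (hR : ∀ i ∈ Finset.Icc 1 K, 0 < R K q σ F i) :
    Tendsto (ddiv K q σ F) atTop (nhds (-Real.log (R K q σ F K))) := by
  have hsum : -Real.log (R K q σ F K)
      = ∑ i ∈ Finset.Icc 1 K, (if i = K then -Real.log (R K q σ F K) else 0) := by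
    rw [Finset.sum_ite_eq' (Finset.Icc 1 K) K]
    simp [hK]
  rw [hsum]
  unfold ddiv
  refine tendsto_finset_sum _ fun i hi => ?_
  have hRi := hR i hi
  have hW := W_tendsto K q σ hσ i
  by_cases hik : i = K
  · subst hik
    rw [if_pos rfl] at hW ⊢
    -- W → 1, so W * log (W / R) → 1 * log (1 / R) = - log R
    have hlog : Tendsto (fun x => Real.log (W i q σ x i / R i q σ F i)) atTop
        (nhds (Real.log (1 / R i q σ F i))) := by
      refine (Real.continuousAt_log ?_).tendsto.comp (hW.div_const _)
      positivity
    have := hW.mul hlog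
    rw [one_mul, Real.log_div one_ne_zero hRi.ne', Real.log_one, zero_sub] at this
    exact this
  · simp only [if_neg hik] at hW ⊢
    -- W → 0, so W * log (W / R) → 0
    have hcont : Tendsto (fun t : ℝ => t * Real.log t - t * Real.log (R K q σ F i))
        (nhds 0) (nhds 0) := by
      have h1 : Tendsto (fun t : ℝ => t * Real.log t) (nhds 0) (nhds (0 * Real.log 0)) :=
        Real.continuous_mul_log.tendsto 0
      have h2 : Tendsto (fun t : ℝ => t * Real.log (R K q σ F i)) (nhds 0)
          (nhds (0 * Real.log (R K q σ F i))) :=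
        (continuous_id.mul continuous_const).tendsto 0
      have := h1.sub h2
      simpa using this
    have key : Tendsto (fun x => W K q σ x i * Real.log (W K q σ x i)
        - W K q σ x i * Real.log (R K q σ F i)) atTop (nhds 0) := hcont.comp hW
    refine key.congr fun x => ?_
    by_cases hw : W K q σ x i = 0
    · simp [hw]
    · rw [Real.log_div hw hRi.ne']
      ring
end

section
/- Suppose F* maximizes the mutual information I(F) over average-power-constrained distributions, and there exist γ* ≥ 0 and a finite A_0 such that d(x;F*) < L := -log R(y_K;F*) for all x > A_0, where d(x;F*) + γ*(P - x²) ≤ I(F*) = C for all x with equality on the support of F*. Then there exists a finite A_2* such that every point of the support of F* is at most A_2*; i.e., the support of F* is bounded above. -/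
open MeasureTheory Filter Finset

/-- The support of a measure: points all of whose neighborhoods have positive measure. -/
def msupport (F : Measure ℝ) : Set ℝ := {x | ∀ U ∈ nhds x, 0 < F U}

theorem support_bounded_above (K : ℕ) (hK : 1 ≤ K) (q : ℕ → ℝ) (σ : ℝ) (hσ : 0 < σ)
    (hq : ∀ j, 1 ≤ j → j < K - 1 → q j < q (j + 1))
    (F : Measure ℝ) [IsProbabilityMeasure F] (P C γ A₀ L : ℝ)
    (hγ : 0 ≤ γ)
    (hC : C = ∫ x, ddiv K q σ F x ∂F)
    (hKKT : ∀ x : ℝ, ddiv K q σ F x + γ * (P - x ^ 2) ≤ C)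
    (hEq : ∀ x ∈ msupport F, ddiv K q σ F x + γ * (P - x ^ 2) = C)
    (hL : L = -Real.log (R K q σ F K))
    (hlim : Tendsto (ddiv K q σ F) atTop (nhds L))
    (hlt : ∀ x, A₀ < x → ddiv K q σ F x < L) :
    ∃ A₂ : ℝ, ∀ x ∈ msupport F, x ≤ A₂ := by
  rcases eq_or_lt_of_le hγ with hγ0 | hγpos
  · -- γ = 0 case
    refine ⟨A₀, fun x hx => ?_⟩
    by_contra hxA
    push_neg at hxA
    have hLC : L ≤ C := by
      refine le_of_tendsto hlim (Eventually.of_forall fun y => ?_)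
      have := hKKT y
      rw [← hγ0] at this
      linarith
    have hdx : ddiv K q σ F x = C := by
      have := hEq x hx
      rw [← hγ0] at this
      linarith
    have := hlt x hxA
    linarith
  · -- γ > 0 case
    have hM : ∃ M : ℝ, ∀ y ≥ M, ddiv K q σ F y < L + 1 := by
      have h := hlim.eventually (eventually_lt_nhds (show L < L + 1 by linarith))
      rcases (eventually_atTop.mp h) with ⟨M, hM⟩
      exact ⟨M, hM⟩
    rcases hM with ⟨M, hM⟩
    set T : ℝ := (L + 1 - C + γ * P) / γ with hT
    refine ⟨max M (Real.sqrt T), fun x hx => ?_⟩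
    by_contra hxA
    push_neg at hxA
    have hxM : M ≤ x := le_of_lt (lt_of_le_of_lt (le_max_left _ _) hxA)
    have hxs : Real.sqrt T < x := lt_of_le_of_lt (le_max_right _ _) hxA
    have hx0 : 0 ≤ x := le_of_lt (lt_of_le_of_lt (Real.sqrt_nonneg T) hxs)
    have hx2 : T < x ^ 2 := by
      rcases le_or_gt T 0 with h | h
      · have h0 : 0 < x := lt_of_le_of_lt (Real.sqrt_nonneg T) hxs
        nlinarith
      · have := Real.sq_sqrt (le_of_lt h)
        nlinarith [Real.sqrt_nonneg T]
    have hdx : ddiv K q σ F x + γ * (P - x ^ 2) = C := hEq x hx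
    have hdlt : ddiv K q σ F x < L + 1 := hM x hxM
    have hγT : γ * T = L + 1 - C + γ * P := by
      rw [hT]; field_simp [hγpos.ne']
    nlinarith
end

section
/- For a memoryless channel with continuous input X taking values in a bounded interval [A_1, A_2], finite output alphabet {y_1,...,y_K}, and transition probabilities W_i(x) = P(Y = y_i | X = x) continuous in x, the capacity under an average power constraint E[X²] ≤ P is achieved by a discrete input distribution supported on at most K+1 points. -/
open MeasureTheory Filter Finset

/-- Mutual information of a channel with input in `ℝ` and finite output alphabet `Fin K`,
with transition probabilities `W`, under input distribution `F` (convention `0 log 0 = 0`). -/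
noncomputable def MI {K : ℕ} (W : ℝ → Fin K → ℝ) (F : Measure ℝ) : ℝ :=
  ∑ i : Fin K, ∫ x, W x i * Real.log (W x i / ∫ y, W y i ∂F) ∂F

lemma aux_integrable {E : Type*} [NormedAddCommGroup E] {A₁ A₂ : ℝ}
    (μ : Measure ℝ) [IsFiniteMeasure μ] (hμ : μ (Set.Icc A₁ A₂)ᶜ = 0)
    {g : ℝ → E} (hg : Continuous g) : Integrable g μ := by
  obtain ⟨C, hC⟩ := (isCompact_Icc (a := A₁) (b := A₂)).exists_bound_of_continuousOn
    hg.continuousOn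
  refine ⟨hg.aestronglyMeasurable, HasFiniteIntegral.of_bounded (C := C) ?_⟩
  have hae : ∀ᵐ x ∂μ, x ∈ Set.Icc A₁ A₂ := by
    rw [ae_iff]
    convert hμ using 2
    rfl
  filter_upwards [hae] with x hx using hC x hx

lemma aux_dirac_compl {A₁ A₂ a : ℝ} (ha : a ∈ Set.Icc A₁ A₂) :
    Measure.dirac a (Set.Icc A₁ A₂)ᶜ = 0 := by
  rw [Measure.dirac_apply' _ measurableSet_Icc.compl]
  simp [ha]

lemma sum_extend {M : Type*} [AddCommMonoid M] {m n : ℕ} (h : m ≤ n) (g : Fin m → M) :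
    (∑ j : Fin n, if hj : (j : ℕ) < m then g ⟨j, hj⟩ else 0) = ∑ i : Fin m, g i := by
  rw [Fin.sum_univ_eq_sum_range (fun j => if hj : j < m then g ⟨j, hj⟩ else 0) n]
  rw [show (∑ i : Fin m, g i)
      = ∑ j : Fin m, (fun j => if hj : j < m then g ⟨j, hj⟩ else 0) (j : ℕ) by
    refine Finset.sum_congr rfl fun j _ => ?_
    simp [j.isLt]]
  rw [Fin.sum_univ_eq_sum_range (fun j => if hj : j < m then g ⟨j, hj⟩ else 0) m]
  refine (Finset.sum_subset (Finset.range_subset_range.2 h) fun x _ hx => ?_).symm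
  rw [Finset.mem_range, not_lt] at hx
  rw [dif_neg (by omega)]

lemma integral_sum_smul_dirac {E : Type*} [NormedAddCommGroup E] [NormedSpace ℝ E] [CompleteSpace E]
    {n : ℕ} (w : Fin n → ℝ) (hw : ∀ j, 0 ≤ w j) (t : Fin n → ℝ)
    {A₁ A₂ : ℝ} (ht : ∀ j, t j ∈ Set.Icc A₁ A₂)
    {g : ℝ → E} (hg : Continuous g) :
    ∫ x, g x ∂(∑ j : Fin n, (ENNReal.ofReal (w j)) • Measure.dirac (t j))
      = ∑ j : Fin n, w j • g (t j) := by
  have hint : ∀ j : Fin n, Integrable g ((ENNReal.ofReal (w j)) • Measure.dirac (t j)) := by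
    intro j
    exact (aux_integrable (A₁ := t j) (A₂ := t j) _
      (aux_dirac_compl (Set.mem_Icc.2 ⟨le_rfl, le_rfl⟩)) hg).smul_measure ENNReal.ofReal_ne_top
  rw [integral_finset_sum_measure fun j _ => hint j]
  refine Finset.sum_congr rfl fun j _ => ?_
  rw [integral_smul_measure, integral_dirac, ENNReal.toReal_ofReal (hw j)]

lemma MI_eq {K : ℕ} {A₁ A₂ : ℝ} (W : ℝ → Fin K → ℝ)
    (hW0 : ∀ x i, 0 ≤ W x i) (hWc : ∀ i, Continuous fun x => W x i)
    (G : Measure ℝ) [IsProbabilityMeasure G] (hG : G (Set.Icc A₁ A₂)ᶜ = 0) :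
    MI W G = (∫ x, ∑ i : Fin K, W x i * Real.log (W x i) ∂G)
      - ∑ i : Fin K, (∫ x, W x i ∂G) * Real.log (∫ x, W x i ∂G) := by
  have hWlogc : ∀ i : Fin K, Continuous fun x => W x i * Real.log (W x i) :=
    fun i => Real.continuous_mul_log.comp (hWc i)
  have hWlogint : ∀ i : Fin K, Integrable (fun x => W x i * Real.log (W x i)) G :=
    fun i => aux_integrable G hG (hWlogc i)
  have hWint : ∀ i : Fin K, Integrable (fun x => W x i) G :=
    fun i => aux_integrable G hG (hWc i)
  rw [MI, integral_finset_sum _ fun i _ => hWlogint i, ← Finset.sum_sub_distrib]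
  refine Finset.sum_congr rfl fun i _ => ?_
  set R : ℝ := ∫ x, W x i ∂G with hR
  by_cases hR0 : R = 0
  · have hWae : (fun x => W x i) =ᵐ[G] 0 := by
      rw [← integral_eq_zero_iff_of_nonneg (fun x => hW0 x i) (hWint i)]
      exact hR0
    have h1 : ∫ x, W x i * Real.log (W x i / R) ∂G = 0 := by
      rw [hR0]
      simp
    have h2 : ∫ x, W x i * Real.log (W x i) ∂G = 0 := by
      have hcongr : (fun x => W x i * Real.log (W x i)) =ᵐ[G] 0 := by
        filter_upwards [hWae] with x hx
        have hx' : W x i = 0 := hx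
        simp [hx']
      rw [integral_congr_ae hcongr]
      simp
    rw [h1, h2, hR0]
    simp
  · have hptw : ∀ x : ℝ, W x i * Real.log (W x i / R)
        = W x i * Real.log (W x i) - W x i * Real.log R := by
      intro x
      rcases eq_or_lt_of_le (hW0 x i) with h | h
      · simp [← h]
      · rw [Real.log_div (ne_of_gt h) hR0]
        ring
    calc ∫ x, W x i * Real.log (W x i / R) ∂G
        = ∫ x, (W x i * Real.log (W x i) - W x i * Real.log R) ∂G := by
          exact integral_congr_ae (Filter.Eventually.of_forall hptw)
      _ = (∫ x, W x i * Real.log (W x i) ∂G) - (∫ x, W x i ∂G) * Real.log R := by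
          rw [integral_sub (hWlogint i) ((hWint i).mul_const _), integral_mul_const]
      _ = (∫ x, W x i * Real.log (W x i) ∂G) - R * Real.log R := by rw [← hR]

lemma fenchel_bunt {E : Type*} [NormedAddCommGroup E] [NormedSpace ℝ E]
    [FiniteDimensional ℝ E] {n : ℕ} (hn : Module.finrank ℝ E = n) (hn1 : 1 ≤ n)
    {A₁ A₂ : ℝ} (hA : A₁ ≤ A₂) {c : ℝ → E} (hc : Continuous c)
    {v : E} (hv : v ∈ convexHull ℝ (c '' Set.Icc A₁ A₂)) :
    ∃ w t : Fin (n + 1) → ℝ,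
      (∀ j, 0 ≤ w j) ∧ (∑ j, w j = 1) ∧ (∀ j, t j ∈ Set.Icc A₁ A₂) ∧
      (∑ j, w j • c (t j) = v) ∧ (∃ j₀, w j₀ = 0) := by
  classical
  have package : ∀ (m : ℕ), m ≤ n + 1 → ∀ (lam ξ : Fin m → ℝ),
      (∀ i, 0 ≤ lam i) → (∑ i, lam i = 1) → (∀ i, ξ i ∈ Set.Icc A₁ A₂) →
      (∑ i, lam i • c (ξ i) = v) → (m ≤ n ∨ ∃ i, lam i = 0) →
      ∃ w t : Fin (n + 1) → ℝ,
        (∀ j, 0 ≤ w j) ∧ (∑ j, w j = 1) ∧ (∀ j, t j ∈ Set.Icc A₁ A₂) ∧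
        (∑ j, w j • c (t j) = v) ∧ (∃ j₀, w j₀ = 0) := by
    intro m hm lam ξ h0 h1 hI hvs hcase
    by_cases hmn : m ≤ n
    · refine ⟨fun j => if hj : (j : ℕ) < m then lam ⟨j, hj⟩ else 0,
        fun j => if hj : (j : ℕ) < m then ξ ⟨j, hj⟩ else A₁, fun j => ?_, ?_, fun j => ?_, ?_, ?_⟩
      · dsimp only; split
        · exact h0 _
        · exact le_rfl
      · rw [sum_extend (hmn.trans (Nat.le_succ n)) lam]
        exact h1
      · dsimp only; split
        · exact hI _
        · exact Set.left_mem_Icc.2 hA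
      · rw [show (∑ j : Fin (n+1), (if hj : (j : ℕ) < m then lam ⟨j, hj⟩ else 0) •
            c (if hj : (j : ℕ) < m then ξ ⟨j, hj⟩ else A₁))
            = ∑ j : Fin (n+1), (if hj : (j : ℕ) < m then lam ⟨j, hj⟩ • c (ξ ⟨j, hj⟩) else 0) from
          Finset.sum_congr rfl fun j _ => by by_cases hj : (j : ℕ) < m <;> simp [hj]]
        rw [sum_extend (hmn.trans (Nat.le_succ n)) (fun i => lam i • c (ξ i))]
        exact hvs
      · refine ⟨⟨n, Nat.lt_succ_self n⟩, ?_⟩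
        show (if hj : ((⟨n, Nat.lt_succ_self n⟩ : Fin (n+1)) : ℕ) < m
          then lam ⟨_, hj⟩ else 0) = 0
        rw [dif_neg]
        simp only [not_lt]
        exact hmn
    · have hmeq : m = n + 1 := le_antisymm hm (not_le.1 hmn)
      obtain ⟨i0, hi0⟩ := hcase.resolve_left hmn
      refine ⟨fun j => lam (Fin.cast hmeq.symm j), fun j => ξ (Fin.cast hmeq.symm j),
        fun j => h0 _, ?_, fun j => hI _, ?_, ⟨Fin.cast hmeq i0, ?_⟩⟩
      · exact (Fintype.sum_equiv (finCongr hmeq.symm)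
          (fun j : Fin (n+1) => lam (Fin.cast hmeq.symm j)) lam fun j => by simp).trans h1
      · exact (Fintype.sum_equiv (finCongr hmeq.symm)
          (fun j : Fin (n+1) => lam (Fin.cast hmeq.symm j) • c (ξ (Fin.cast hmeq.symm j)))
          (fun i => lam i • c (ξ i)) fun j => by simp).trans hvs
      · show lam (Fin.cast hmeq.symm (Fin.cast hmeq i0)) = 0
        rw [show Fin.cast hmeq.symm (Fin.cast hmeq i0) = i0 from by ext; simp]
        exact hi0
  rw [convexHull_eq_union] at hv
  simp only [Set.mem_iUnion] at hv
  obtain ⟨T, hTs, hTi, hvT⟩ := hv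
  have hcard : T.card ≤ n + 1 := by
    have h1 := hTi.card_le_finrank_succ
    rw [Fintype.card_coe] at h1
    have h2 := Submodule.finrank_le (vectorSpan ℝ (Set.range ((↑) : T → E)))
    rw [hn] at h2
    omega
  rw [Finset.convexHull_eq] at hvT
  obtain ⟨wf, hwf0, hwf1, hwfc⟩ := hvT
  rw [Finset.centerMass_eq_of_sum_1 _ id hwf1] at hwfc
  set m := T.card with hmdef
  let e : Fin m ≃ ↥T := (Fintype.equivFinOfCardEq (Fintype.card_coe T)).symm
  let y : Fin m → E := fun i => ((e i : E))
  have hyT : ∀ i, y i ∈ T := fun i => (e i).2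
  have hyI : ∀ i, y i ∈ c '' Set.Icc A₁ A₂ := fun i => hTs (hyT i)
  choose ξ hξI hξc using hyI
  set lam : Fin m → ℝ := fun i => wf (y i) with hlamdef
  have hlam0 : ∀ i, 0 ≤ lam i := fun i => hwf0 _ (hyT i)
  have hlam1 : ∑ i, lam i = 1 := by
    rw [← hwf1]
    exact (Fintype.sum_equiv e _ _ fun i => rfl).trans (Finset.sum_coe_sort T wf)
  have hlamv : ∑ i, lam i • y i = v := by
    rw [← hwfc]
    exact (Fintype.sum_equiv e _ _ fun i => rfl).trans
      (Finset.sum_coe_sort T (fun a => wf a • id a))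
  have hsumc : ∑ i, lam i • c (ξ i) = ∑ i, lam i • y i :=
    Finset.sum_congr rfl fun i _ => by rw [hξc i]
  by_cases hmn : m ≤ n
  · exact package m (hmn.trans (Nat.le_succ n)) lam ξ hlam0 hlam1 hξI
      (hsumc.trans hlamv) (Or.inl hmn)
  by_cases hzero : ∃ i, lam i = 0
  · exact package m hcard lam ξ hlam0 hlam1 hξI (hsumc.trans hlamv) (Or.inr hzero)
  push_neg at hzero
  have hlampos : ∀ i, 0 < lam i := fun i => (hlam0 i).lt_of_ne (Ne.symm (hzero i))
  have hmeq : m = n + 1 := le_antisymm hcard (not_le.1 hmn)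
  have hy_ind : AffineIndependent ℝ y := hTi.comp_embedding e.toEmbedding
  have htot : affineSpan ℝ (Set.range y) = ⊤ := by
    rw [hy_ind.affineSpan_eq_top_iff_card_eq_finrank_add_one]
    simp [hmeq, hn]
  let b : AffineBasis (Fin m) ℝ E := ⟨y, hy_ind, htot⟩
  have hm2 : 2 ≤ m := by omega
  let i₀ : Fin m := ⟨0, by omega⟩
  let i₁ : Fin m := ⟨1, by omega⟩
  have hne : i₀ ≠ i₁ := by simp [i₀, i₁, Fin.ext_iff]
  set σ : ℝ → ℝ := fun τ => (1 - τ) * ξ i₀ + τ * ξ i₁ with hσdef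
  have hσc : Continuous σ := by
    rw [hσdef]; fun_prop
  have hσI : ∀ τ ∈ Set.Icc (0:ℝ) 1, σ τ ∈ Set.Icc A₁ A₂ := by
    intro τ hτ
    have := (convex_Icc A₁ A₂) (hξI i₀) (hξI i₁)
      (by linarith [hτ.2] : (0:ℝ) ≤ 1 - τ) hτ.1 (by ring)
    simpa [smul_eq_mul, hσdef] using this
  set β : ℝ → Fin m → ℝ := fun τ i => b.coord i (c (σ τ)) with hβdef
  have hβc : ∀ i, Continuous fun τ => β τ i := fun i =>
    (continuous_barycentric_coord b i).comp (hc.comp hσc)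
  have hβsum : ∀ τ, ∑ i, β τ i = 1 := fun τ => b.sum_coord_apply_eq_one _
  have hβrep : ∀ τ, ∑ i, β τ i • y i = c (σ τ) := fun τ =>
    b.linear_combination_coord_eq_self _
  have hβat0 : ∀ i, β 0 i = if i = i₀ then 1 else 0 := by
    intro i
    have hσ0 : σ 0 = ξ i₀ := by rw [hσdef]; ring
    show b.coord i (c (σ 0)) = _
    rw [hσ0, hξc i₀]
    exact b.coord_apply i i₀
  have hβat1 : β 1 i₀ = 0 := by
    have hσ1 : σ 1 = ξ i₁ := by rw [hσdef]; ring
    show b.coord i₀ (c (σ 1)) = 0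
    rw [hσ1, hξc i₁]
    have hca := b.coord_apply i₀ i₁
    rw [if_neg hne] at hca
    exact hca
  set Bad : Set ℝ := Set.Icc 0 1 ∩ ({τ | β τ i₀ ≤ 0}
      ∪ ⋃ i, {τ | i ≠ i₀ ∧ lam i * β τ i₀ - lam i₀ * β τ i ≤ 0}) with hBaddef
  have hBadclosed : IsClosed Bad := by
    refine isClosed_Icc.inter (IsClosed.union (isClosed_le (hβc i₀) continuous_const) ?_)
    refine isClosed_iUnion_of_finite fun i => ?_
    by_cases hi : i = i₀
    · simp only [hi, ne_eq, not_true_eq_false, false_and, Set.setOf_false]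
      exact isClosed_empty
    · simp only [hi, ne_eq, not_false_eq_true, true_and]
      exact isClosed_le (((continuous_const.mul (hβc i₀)).sub
        (continuous_const.mul (hβc i)))) continuous_const
  have h1Bad : (1:ℝ) ∈ Bad :=
    ⟨⟨zero_le_one, le_rfl⟩, Or.inl (by rw [Set.mem_setOf_eq, hβat1])⟩
  have hbdd : BddBelow Bad := ⟨0, fun x hx => hx.1.1⟩
  set t0 : ℝ := sInf Bad with ht0def
  have ht0Bad : t0 ∈ Bad := hBadclosed.csInf_mem ⟨1, h1Bad⟩ hbdd
  have ht0I : t0 ∈ Set.Icc (0:ℝ) 1 := ht0Bad.1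
  have key : ∀ g : ℝ → ℝ, Continuous g → 0 < g 0 →
      (∀ τ, τ ∈ Set.Icc (0:ℝ) 1 → g τ ≤ 0 → τ ∈ Bad) → 0 ≤ g t0 := by
    intro g hgc hg0 hmem
    by_contra hneg
    push_neg at hneg
    obtain ⟨τ', hτ'I, hτ'⟩ := intermediate_value_Icc' ht0I.1 hgc.continuousOn
      (Set.mem_Icc.2 ⟨hneg.le, hg0.le⟩)
    have hτ'Bad : τ' ∈ Bad := hmem τ' ⟨hτ'I.1, hτ'I.2.trans ht0I.2⟩ hτ'.le
    have hle : t0 ≤ τ' := csInf_le hbdd hτ'Bad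
    have heq : τ' = t0 := le_antisymm hτ'I.2 hle
    rw [← heq, hτ'] at hneg
    exact lt_irrefl 0 hneg
  have hβt0 : 0 ≤ β t0 i₀ := by
    refine key (fun τ => β τ i₀) (hβc i₀) ?_ fun τ hτ hle => ⟨hτ, Or.inl hle⟩
    show (0:ℝ) < β 0 i₀
    rw [hβat0 i₀, if_pos rfl]
    exact zero_lt_one
  have hφt0 : ∀ i, i ≠ i₀ → 0 ≤ lam i * β t0 i₀ - lam i₀ * β t0 i := by
    intro i hi
    refine key (fun τ => lam i * β τ i₀ - lam i₀ * β τ i)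
      ((continuous_const.mul (hβc i₀)).sub (continuous_const.mul (hβc i))) ?_
      fun τ hτ hle => ⟨hτ, Or.inr (Set.mem_iUnion.2 ⟨i, hi, hle⟩)⟩
    show (0:ℝ) < lam i * β 0 i₀ - lam i₀ * β 0 i
    rw [hβat0 i₀, hβat0 i, if_pos rfl, if_neg hi]
    simpa using hlampos i
  have hβpos : 0 < β t0 i₀ := by
    rcases eq_or_lt_of_le hβt0 with heq | h
    swap
    · exact h
    exfalso
    have hble : ∀ i, i ≠ i₀ → β t0 i ≤ 0 := by
      intro i hi
      have h2 := hφt0 i hi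
      rw [← heq] at h2
      nlinarith [hlampos i₀]
    have hsum := hβsum t0
    rw [← Finset.add_sum_erase _ _ (Finset.mem_univ i₀)] at hsum
    have hsle : ∑ i ∈ Finset.univ.erase i₀, β t0 i ≤ 0 :=
      Finset.sum_nonpos fun i hi => hble i (Finset.ne_of_mem_erase hi)
    rw [← heq] at hsum
    linarith
  obtain ⟨j, hj, hjle⟩ : ∃ i, i ≠ i₀ ∧ lam i * β t0 i₀ - lam i₀ * β t0 i ≤ 0 := by
    rcases ht0Bad.2 with h | h
    · exact absurd h (not_le.2 hβpos)
    · simpa using Set.mem_iUnion.1 h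
  have hφj : lam j * β t0 i₀ - lam i₀ * β t0 j = 0 := le_antisymm hjle (hφt0 j hj)
  set μ := lam i₀ / β t0 i₀ with hμdef
  have hμβ : μ * β t0 i₀ = lam i₀ := div_mul_cancel₀ _ (ne_of_gt hβpos)
  set lam2 : Fin m → ℝ := fun i => if i = i₀ then μ else lam i - μ * β t0 i with hlam2def
  set ξ2 : Fin m → ℝ := fun i => if i = i₀ then σ t0 else ξ i with hξ2def
  have hl2i₀ : lam2 i₀ = μ := if_pos rfl
  have hl2 : ∀ i, i ≠ i₀ → lam2 i = lam i - μ * β t0 i := fun i hi => if_neg hi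
  have hφalt : ∀ i, lam i - μ * β t0 i = (lam i * β t0 i₀ - lam i₀ * β t0 i) / β t0 i₀ := by
    intro i
    rw [hμdef]
    field_simp
  have hlam20 : ∀ i, 0 ≤ lam2 i := by
    intro i
    by_cases hi : i = i₀
    · rw [hi, hl2i₀, hμdef]
      exact div_nonneg (hlam0 i₀) hβpos.le
    · rw [hl2 i hi, hφalt i]
      exact div_nonneg (hφt0 i hi) hβpos.le
  have hlam2j : lam2 j = 0 := by
    rw [hl2 j hj, hφalt j, hφj, zero_div]
  have herasesum : ∀ f : Fin m → ℝ, ∑ i ∈ Finset.univ.erase i₀, f i = (∑ i, f i) - f i₀ := by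
    intro f
    have := Finset.add_sum_erase Finset.univ f (Finset.mem_univ i₀)
    linarith
  have hlam21 : ∑ i, lam2 i = 1 := by
    rw [← Finset.add_sum_erase _ lam2 (Finset.mem_univ i₀), hl2i₀]
    rw [Finset.sum_congr rfl fun i hi => hl2 i (Finset.ne_of_mem_erase hi)]
    rw [Finset.sum_sub_distrib, ← Finset.mul_sum, herasesum lam, herasesum (fun i => β t0 i),
      hlam1, hβsum t0]
    nlinarith [hμβ]
  have hξ2I : ∀ i, ξ2 i ∈ Set.Icc A₁ A₂ := by
    intro i
    by_cases hi : i = i₀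
    · rw [hξ2def]
      simp only [hi, if_pos rfl]
      exact hσI t0 ht0I
    · rw [hξ2def]
      simp only [if_neg hi]
      exact hξI i
  have hvec : ∑ i, lam2 i • c (ξ2 i) = v := by
    have hstep : ∀ i, lam2 i • c (ξ2 i)
        = (if i = i₀ then μ • c (σ t0) else lam i • y i - (μ * β t0 i) • y i) := by
      intro i
      by_cases hi : i = i₀
      · rw [hi, hl2i₀, if_pos rfl, hξ2def]
        simp
      · rw [hl2 i hi, if_neg hi, hξ2def]
        simp only [if_neg hi]
        rw [hξc i, sub_smul]
    rw [Finset.sum_congr rfl fun i _ => hstep i]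
    rw [← Finset.add_sum_erase _ _ (Finset.mem_univ i₀), if_pos rfl]
    have h2 : ∑ i ∈ Finset.univ.erase i₀,
        (if i = i₀ then μ • c (σ t0) else lam i • y i - (μ * β t0 i) • y i)
        = (∑ i ∈ Finset.univ.erase i₀, lam i • y i)
          - ∑ i ∈ Finset.univ.erase i₀, (μ * β t0 i) • y i := by
      rw [← Finset.sum_sub_distrib]
      exact Finset.sum_congr rfl fun i hi => by rw [if_neg (Finset.ne_of_mem_erase hi)]
    rw [h2]
    have h3 : μ • c (σ t0) = ∑ i, (μ * β t0 i) • y i := by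
      rw [← hβrep t0, Finset.smul_sum]
      exact Finset.sum_congr rfl fun i _ => smul_smul μ (β t0 i) (y i)
    rw [h3, ← Finset.add_sum_erase _ (fun i => (μ * β t0 i) • y i) (Finset.mem_univ i₀), hμβ]
    rw [← hlamv, ← Finset.add_sum_erase _ (fun i => lam i • y i) (Finset.mem_univ i₀)]
    abel
  exact package m hcard lam2 ξ2 hlam20 hlam21 hξ2I hvec (Or.inr ⟨j, hlam2j⟩)


set_option maxHeartbeats 1000000 in
theorem capacity_achieved_discrete (K : ℕ) (hK : 1 ≤ K) (A₁ A₂ P : ℝ) (hA : A₁ ≤ A₂)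
    (W : ℝ → Fin K → ℝ)
    (hW0 : ∀ x i, 0 ≤ W x i)
    (hW1 : ∀ x, ∑ i : Fin K, W x i = 1)
    (hWc : ∀ i, Continuous fun x => W x i)
    (hfeas : ∃ x₀ ∈ Set.Icc A₁ A₂, x₀ ^ 2 ≤ P) :
    ∃ F : Measure ℝ, IsProbabilityMeasure F ∧ F (Set.Icc A₁ A₂)ᶜ = 0 ∧
      (∫ x, x ^ 2 ∂F) ≤ P ∧
      (∃ s : Finset ℝ, s.card ≤ K + 1 ∧ F ↑s = 1) ∧
      ∀ G : Measure ℝ, IsProbabilityMeasure G → G (Set.Icc A₁ A₂)ᶜ = 0 →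
        (∫ x, x ^ 2 ∂G) ≤ P → MI W G ≤ MI W F := by
  classical
  obtain ⟨k, rfl⟩ : ∃ k, K = k + 1 := ⟨K - 1, (Nat.succ_pred_eq_of_pos hK).symm⟩
  obtain ⟨x₀, hx₀I, hx₀P⟩ := hfeas
  set f : ℝ → ℝ := fun x => ∑ i : Fin (k+1), W x i * Real.log (W x i) with hfdef
  have hfc : Continuous f := by
    rw [hfdef]
    exact continuous_finset_sum _ fun i _ => Real.continuous_mul_log.comp (hWc i)
  set c : ℝ → (Fin (k+2) → ℝ) :=
    fun x => Fin.cons (f x) (Fin.cons (x ^ 2) (fun j : Fin k => W x j.succ)) with hcdef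
  have hc1 : ∀ x, c x 1 = x ^ 2 := by
    intro x
    have h1 : (1 : Fin (k+2)) = Fin.succ 0 := Fin.succ_zero_eq_one.symm
    rw [hcdef]
    beta_reduce
    rw [h1, Fin.cons_succ, Fin.cons_zero]
  have hc : Continuous c := by
    rw [hcdef]
    refine continuous_pi fun j => ?_
    refine Fin.cases ?_ (fun j1 => ?_) j
    · simp only [Fin.cons_zero]
      exact hfc
    · refine Fin.cases ?_ (fun j2 => ?_) j1
      · simp only [Fin.cons_succ, Fin.cons_zero]
        exact continuous_pow 2
      · simp only [Fin.cons_succ]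
        exact hWc _
  set S := convexHull ℝ (c '' Set.Icc A₁ A₂) with hSdef
  have hSc : IsCompact S := by
    have hKc : IsCompact ((stdSimplex ℝ (Fin (k+3))) ×ˢ
        (Set.univ.pi fun _ : Fin (k+3) => Set.Icc A₁ A₂)) :=
      (isCompact_stdSimplex (𝕜 := ℝ) (ι := Fin (k+3))).prod (isCompact_univ_pi fun _ => isCompact_Icc)
    have hΨc : Continuous fun p : (Fin (k+3) → ℝ) × (Fin (k+3) → ℝ) =>
        ∑ j : Fin (k+3), p.1 j • c (p.2 j) :=
      continuous_finset_sum _ fun j _ => ((continuous_apply j).comp continuous_fst).smul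
        (hc.comp ((continuous_apply j).comp continuous_snd))
    have himg : S = (fun p : (Fin (k+3) → ℝ) × (Fin (k+3) → ℝ) =>
        ∑ j : Fin (k+3), p.1 j • c (p.2 j)) '' ((stdSimplex ℝ (Fin (k+3))) ×ˢ
        (Set.univ.pi fun _ : Fin (k+3) => Set.Icc A₁ A₂)) := by
      apply Set.Subset.antisymm
      · intro v hv
        have hrank : Module.finrank ℝ (Fin (k+2) → ℝ) = k + 2 := by simp
        obtain ⟨w, t, hw0, hw1, htI, hwt, j₀, hj₀⟩ :=
          fenchel_bunt hrank (by omega) hA hc (hSdef ▸ hv)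
        exact ⟨(w, t), ⟨⟨hw0, hw1⟩, fun j _ => htI j⟩, hwt⟩
      · rintro v ⟨⟨w, t⟩, ⟨⟨hw0, hw1⟩, htI⟩, rfl⟩
        show ∑ j : Fin (k+3), w j • c (t j) ∈ convexHull ℝ (c '' Set.Icc A₁ A₂)
        rw [← Finset.centerMass_eq_of_sum_1 _ (fun j => c (t j)) hw1]
        exact Finset.centerMass_mem_convexHull _ (fun j _ => hw0 j)
          (by rw [hw1]; exact one_pos)
          (fun j _ => Set.mem_image_of_mem c (htI j (Set.mem_univ j)))
    rw [himg]
    exact hKc.image hΨc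
  set Φ : (Fin (k+2) → ℝ) → ℝ := fun u =>
    u 0 - ((1 - ∑ j : Fin k, u j.succ.succ) * Real.log (1 - ∑ j : Fin k, u j.succ.succ)
      + ∑ j : Fin k, u j.succ.succ * Real.log (u j.succ.succ)) with hΦdef
  have hΦc : Continuous Φ := by
    rw [hΦdef]
    have h1 : Continuous fun u : Fin (k+2) → ℝ => ∑ j : Fin k, u j.succ.succ :=
      continuous_finset_sum _ fun j _ => continuous_apply _
    exact (continuous_apply 0).sub ((Real.continuous_mul_log.comp
      (continuous_const.sub h1)).add
      (continuous_finset_sum _ fun j _ => Real.continuous_mul_log.comp (continuous_apply _)))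
  have hMI : ∀ G : Measure ℝ, IsProbabilityMeasure G → G (Set.Icc A₁ A₂)ᶜ = 0 →
      MI W G = Φ (∫ x, c x ∂G) := by
    intro G hPG hGc
    haveI := hPG
    have hcint : Integrable c G := aux_integrable G hGc hc
    have happly : ∀ j : Fin (k+2), (∫ x, c x ∂G) j = ∫ x, c x j ∂G := by
      intro j
      have h := (ContinuousLinearMap.proj (R := ℝ) (φ := fun _ : Fin (k+2) => ℝ)
        j).integral_comp_comm hcint
      exact h.symm
    have hWint : ∀ i : Fin (k+1), Integrable (fun x => W x i) G :=
      fun i => aux_integrable G hGc (hWc i)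
    have hR0 : ∫ x, W x 0 ∂G = 1 - ∑ j : Fin k, ∫ x, W x j.succ ∂G := by
      have hW0eq : ∀ x : ℝ, W x 0 = 1 - ∑ j : Fin k, W x j.succ := by
        intro x
        have h := hW1 x
        rw [Fin.sum_univ_succ] at h
        linarith
      rw [integral_congr_ae (Filter.Eventually.of_forall hW0eq),
        integral_sub (integrable_const 1) (integrable_finset_sum _ fun j _ => hWint _),
        integral_finset_sum _ fun j _ => hWint _]
      simp
    have hu0 : (∫ x, c x ∂G) 0 = ∫ x, f x ∂G := happly 0
    have huj : ∀ j : Fin k, (∫ x, c x ∂G) j.succ.succ = ∫ x, W x j.succ ∂G :=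
      fun j => happly j.succ.succ
    rw [MI_eq W hW0 hWc G hGc]
    simp only [hΦdef, huj, hu0]
    rw [← hR0, Fin.sum_univ_succ
      (f := fun i : Fin (k+1) => (∫ x, W x i ∂G) * Real.log (∫ x, W x i ∂G))]
    try ring
  set D := S ∩ {u : Fin (k+2) → ℝ | u 1 ≤ P} with hDdef
  have hDc : IsCompact D := hSc.inter_right (isClosed_le (continuous_apply 1) continuous_const)
  have hDne : D.Nonempty := by
    refine ⟨c x₀, subset_convexHull ℝ _ (Set.mem_image_of_mem c hx₀I), ?_⟩
    show c x₀ 1 ≤ P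
    rw [hc1 x₀]
    exact hx₀P
  obtain ⟨vstar, hvD, hvmax⟩ := hDc.exists_isMaxOn hDne hΦc.continuousOn
  have hrank : Module.finrank ℝ (Fin (k+2) → ℝ) = k + 2 := by simp
  obtain ⟨w, t, hw0, hw1, htI, hwt, j₀, hj₀⟩ :=
    fenchel_bunt hrank (by omega) hA hc (hvD.1 : vstar ∈ S)
  set F : Measure ℝ := ∑ j : Fin (k+3), (ENNReal.ofReal (w j)) • Measure.dirac (t j) with hFdef
  have hFapp : ∀ s : Set ℝ, MeasurableSet s →
      F s = ∑ j : Fin (k+3), ENNReal.ofReal (w j) * (if t j ∈ s then 1 else 0) := by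
    intro s hs
    rw [hFdef, Measure.finset_sum_apply]
    refine Finset.sum_congr rfl fun j _ => ?_
    rw [Measure.smul_apply, Measure.dirac_apply' _ hs, smul_eq_mul]
    congr 1
  have hF1 : F Set.univ = 1 := by
    rw [hFapp _ MeasurableSet.univ]
    simp only [Set.mem_univ, if_true, mul_one]
    rw [← ENNReal.ofReal_sum_of_nonneg (fun j _ => hw0 j), hw1, ENNReal.ofReal_one]
  haveI hFprob : IsProbabilityMeasure F := ⟨hF1⟩
  have hFcompl : F (Set.Icc A₁ A₂)ᶜ = 0 := by
    rw [hFapp _ measurableSet_Icc.compl]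
    refine Finset.sum_eq_zero fun j _ => ?_
    rw [if_neg (by simpa using htI j), mul_zero]
  have hmom : ∫ x, x ^ 2 ∂F = vstar 1 := by
    rw [hFdef, integral_sum_smul_dirac w hw0 t htI (continuous_pow 2)]
    calc ∑ j : Fin (k+3), w j • (t j) ^ 2
        = (∑ j : Fin (k+3), w j • c (t j)) 1 := by
          rw [Finset.sum_apply]
          exact Finset.sum_congr rfl fun j _ => by rw [Pi.smul_apply, hc1]
      _ = vstar 1 := by rw [hwt]
  set suppF : Finset ℝ := (Finset.univ.filter fun j => w j ≠ 0).image t with hsupp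
  have hcardsupp : suppF.card ≤ k + 2 := by
    refine Finset.card_image_le.trans ?_
    have hsub : (Finset.univ.filter fun j => w j ≠ 0) ⊆ Finset.univ.erase j₀ := by
      intro x hx
      rw [Finset.mem_erase]
      refine ⟨?_, Finset.mem_univ x⟩
      rintro rfl
      exact (Finset.mem_filter.1 hx).2 hj₀
    refine (Finset.card_le_card hsub).trans ?_
    rw [Finset.card_erase_of_mem (Finset.mem_univ j₀), Finset.card_univ]
    simp
  have hFs : F ↑suppF = 1 := by
    rw [hFapp _ suppF.measurableSet]
    refine Eq.trans (Finset.sum_congr rfl fun j _ => ?_)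
      (by rw [← ENNReal.ofReal_sum_of_nonneg (fun j _ => hw0 j), hw1, ENNReal.ofReal_one])
    by_cases hwj : w j = 0
    · simp [hwj]
    · have hmem : t j ∈ (↑suppF : Set ℝ) := Finset.mem_coe.2
        (Finset.mem_image_of_mem t (Finset.mem_filter.2 ⟨Finset.mem_univ j, hwj⟩))
      rw [if_pos hmem, mul_one]
  have hvF : ∫ x, c x ∂F = vstar := by
    rw [hFdef, integral_sum_smul_dirac w hw0 t htI hc]
    exact hwt
  refine ⟨F, hFprob, hFcompl, by rw [hmom]; exact hvD.2, ⟨suppF, by omega, hFs⟩, ?_⟩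
  intro G hG hGc hGP
  haveI := hG
  rw [hMI G hG hGc, hMI F hFprob hFcompl, hvF]
  have hvG : (∫ x, c x ∂G) ∈ D := by
    constructor
    · refine (convex_convexHull ℝ _).integral_mem hSc.isClosed ?_
        (aux_integrable G hGc hc)
      have hae : ∀ᵐ x ∂G, x ∈ Set.Icc A₁ A₂ := by
        rw [ae_iff]
        convert hGc using 2
        rfl
      filter_upwards [hae] with x hx
      exact subset_convexHull ℝ _ (Set.mem_image_of_mem c hx)
    · show (∫ x, c x ∂G) 1 ≤ P
      have h1 : (∫ x, c x ∂G) 1 = ∫ x, c x 1 ∂G := by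
        have h := (ContinuousLinearMap.proj (R := ℝ) (φ := fun _ : Fin (k+2) => ℝ)
          (1 : Fin (k+2))).integral_comp_comm (aux_integrable G hGc hc)
        exact h.symm
      rw [h1, integral_congr_ae (Filter.Eventually.of_forall fun x => hc1 x)]
      exact hGP
  exact hvmax hvG
end
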